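/- For any finite-alphabet sources with joint PMF P_{XY}, integer delay d with |d| ≤ n, and ρ ∈ [0,1], the Gallager function of the delayed product distribution factorizes as E_n^{(1)}(ρ, P_{X^n Y^n_{(d)}}) = E^{(1)}(ρ, P_{XY}) + (|d|/n)·(E^{(3)}(ρ, P_X) − E^{(1)}(ρ, P_{XY})), where E^{(1)}(ρ, P_{XY}) = log ∑_y (∑_x P_{XY}(x,y)^{1/(1+ρ)})^{1+ρ}, E^{(3)}(ρ, P_X) = log (∑_x P_X(x)^{1/(1+ρ)})^{1+ρ}, and E_n^{(1)}(ρ, R) = (1/n) log ∑_{y^n} (∑_{x^n} R(x^n,y^n)^{1/(1+ρ)})^{1+ρ}. -/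

import Mathlib

open Finset

/-- The delayed joint distribution `P_{X^n Y^n_{(d)}}`: for delay `d ≥ 0`, the first
`|d|` symbols of `x^n` are independent with law `P_X`, the pairs
`(x_{1+|d|},…,x_n)` and `(y_1,…,y_{n-|d|})` are jointly distributed according to
`P_{XY}`, and the last `|d|` symbols of `y^n` are independent with law `P_Y`;
symmetrically for `d < 0`. -/
noncomputable def delayedDist {𝒳 𝒴 : Type*} [Fintype 𝒳] [Fintype 𝒴]
    (PXY : 𝒳 × 𝒴 → ℝ) (n : ℕ) (d : ℤ) (hd : d.natAbs ≤ n) :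
    ((Fin n → 𝒳) × (Fin n → 𝒴)) → ℝ := fun p =>
  let k := d.natAbs
  let PX : 𝒳 → ℝ := fun a => ∑ b, PXY (a, b)
  let PY : 𝒴 → ℝ := fun b => ∑ a, PXY (a, b)
  if 0 ≤ d then
    (∏ i : Fin k, PX (p.1 (Fin.castLE hd i))) *
      (∏ i : Fin (n - k), PXY (p.1 (Fin.cast (Nat.add_sub_cancel' hd) (Fin.natAdd k i)),
        p.2 (Fin.castLE (Nat.sub_le n k) i))) *
      (∏ i : Fin k, PY (p.2 (Fin.cast (Nat.sub_add_cancel hd) (Fin.natAdd (n - k) i))))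
  else
    (∏ i : Fin k, PX (p.1 (Fin.cast (Nat.sub_add_cancel hd) (Fin.natAdd (n - k) i)))) *
      (∏ i : Fin (n - k), PXY (p.1 (Fin.castLE (Nat.sub_le n k) i),
        p.2 (Fin.cast (Nat.add_sub_cancel' hd) (Fin.natAdd k i)))) *
      (∏ i : Fin k, PY (p.2 (Fin.castLE hd i)))



lemma sum_prod_eq {α : Type*} [Fintype α] {k : ℕ} (F : Fin k → α → ℝ) :
    ∑ x : Fin k → α, ∏ i, F i (x i) = ∏ i, ∑ a, F i a := by
  rw [Finset.prod_univ_sum, Fintype.piFinset_univ]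

lemma sum_split {α : Type*} [Fintype α] {k m n : ℕ} (e : Fin k ⊕ Fin m ≃ Fin n)
    (F : Fin k → α → ℝ) (G : Fin m → α → ℝ) :
    ∑ x : Fin n → α, (∏ i, F i (x (e (Sum.inl i)))) * ∏ j, G j (x (e (Sum.inr j)))
      = (∏ i, ∑ a, F i a) * ∏ j, ∑ a, G j a := by
  calc ∑ x : Fin n → α, (∏ i, F i (x (e (Sum.inl i)))) * ∏ j, G j (x (e (Sum.inr j)))
      = ∑ p : (Fin k → α) × (Fin m → α), (∏ i, F i (p.1 i)) * ∏ j, G j (p.2 j) := by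
        apply Fintype.sum_equiv ((Equiv.arrowCongr e (Equiv.refl α)).symm.trans
          (Equiv.sumArrowEquivProdArrow _ _ α))
        intro x
        simp [Equiv.sumArrowEquivProdArrow, Equiv.arrowCongr]
    _ = (∏ i, ∑ a, F i a) * ∏ j, ∑ a, G j a := by
        rw [Fintype.sum_prod_type, ← sum_prod_eq F, ← sum_prod_eq G, Finset.sum_mul_sum]

lemma key_factor {𝒳 𝒴 : Type*} [Fintype 𝒳] [Fintype 𝒴] (PXY : 𝒳 × 𝒴 → ℝ)
    (hP0 : ∀ p, 0 ≤ PXY p) {k m n : ℕ}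
    (ex : Fin k ⊕ Fin m ≃ Fin n) (ey : Fin m ⊕ Fin k ≃ Fin n)
    (ρ : ℝ) (hρ0 : 0 ≤ ρ) :
    ∑ y : Fin n → 𝒴, (∑ x : Fin n → 𝒳,
        ((∏ i, ∑ b, PXY (x (ex (Sum.inl i)), b)) *
         (∏ j, PXY (x (ex (Sum.inr j)), y (ey (Sum.inl j)))) *
         (∏ i, ∑ a, PXY (a, y (ey (Sum.inr i))))) ^ (1 / (1 + ρ))) ^ (1 + ρ)
    = ((∑ a, (∑ b, PXY (a, b)) ^ (1 / (1 + ρ))) ^ k) ^ (1 + ρ) *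
      (∑ b, (∑ a, PXY (a, b) ^ (1 / (1 + ρ))) ^ (1 + ρ)) ^ m * (∑ p, PXY p) ^ k := by
  have ht : (0:ℝ) < 1 + ρ := by linarith
  set s : ℝ := 1 / (1 + ρ) with hsdef
  have hs0 : 0 ≤ s := by positivity
  have hst : s * (1 + ρ) = 1 := by rw [hsdef]; field_simp
  set PX : 𝒳 → ℝ := fun a => ∑ b, PXY (a, b) with hPX
  set PY : 𝒴 → ℝ := fun b => ∑ a, PXY (a, b) with hPY
  have hPX0 : ∀ a, 0 ≤ PX a := fun a => Finset.sum_nonneg fun b _ => hP0 _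
  have hPY0 : ∀ b, 0 ≤ PY b := fun b => Finset.sum_nonneg fun a _ => hP0 _
  set B0 : ℝ := ∑ a, PX a ^ s with hB0
  have hB00 : 0 ≤ B0 := Finset.sum_nonneg fun a _ => Real.rpow_nonneg (hPX0 a) s
  set g : 𝒴 → ℝ := fun b => ∑ a, PXY (a, b) ^ s with hg
  have hg0 : ∀ b, 0 ≤ g b := fun b => Finset.sum_nonneg fun a _ => Real.rpow_nonneg (hP0 _) s
  -- inner sum over x
  have inner : ∀ y : Fin n → 𝒴,
      (∑ x : Fin n → 𝒳, ((∏ i, PX (x (ex (Sum.inl i)))) *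
         (∏ j, PXY (x (ex (Sum.inr j)), y (ey (Sum.inl j)))) *
         (∏ i, PY (y (ey (Sum.inr i))))) ^ s)
      = (B0 ^ k * ∏ j, g (y (ey (Sum.inl j)))) * ∏ i, PY (y (ey (Sum.inr i))) ^ s := by
    intro y
    have hpt : ∀ x : Fin n → 𝒳,
        ((∏ i, PX (x (ex (Sum.inl i)))) *
         (∏ j, PXY (x (ex (Sum.inr j)), y (ey (Sum.inl j)))) *
         (∏ i, PY (y (ey (Sum.inr i))))) ^ s
        = ((∏ i, PX (x (ex (Sum.inl i))) ^ s) *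
           ∏ j, PXY (x (ex (Sum.inr j)), y (ey (Sum.inl j))) ^ s) *
          ∏ i, PY (y (ey (Sum.inr i))) ^ s := by
      intro x
      rw [Real.mul_rpow (mul_nonneg (Finset.prod_nonneg fun i _ => hPX0 _)
            (Finset.prod_nonneg fun j _ => hP0 _)) (Finset.prod_nonneg fun i _ => hPY0 _),
          Real.mul_rpow (Finset.prod_nonneg fun i _ => hPX0 _)
            (Finset.prod_nonneg fun j _ => hP0 _),
          ← Real.finset_prod_rpow _ _ (fun i _ => hPX0 _),
          ← Real.finset_prod_rpow _ _ (fun j _ => hP0 _),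
          ← Real.finset_prod_rpow _ _ (fun i _ => hPY0 _)]
    rw [Finset.sum_congr rfl fun x _ => hpt x, ← Finset.sum_mul,
        sum_split ex (fun i a => PX a ^ s)
          (fun j a => PXY (a, y (ey (Sum.inl j))) ^ s)]
    simp [Finset.prod_const, hg, hB0]
  calc ∑ y : Fin n → 𝒴, (∑ x : Fin n → 𝒳,
        ((∏ i, ∑ b, PXY (x (ex (Sum.inl i)), b)) *
         (∏ j, PXY (x (ex (Sum.inr j)), y (ey (Sum.inl j)))) *
         (∏ i, ∑ a, PXY (a, y (ey (Sum.inr i))))) ^ s) ^ (1 + ρ)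
      = ∑ y : Fin n → 𝒴, (B0 ^ k) ^ (1 + ρ) *
          ((∏ j, g (y (ey (Sum.inl j))) ^ (1 + ρ)) * ∏ i, PY (y (ey (Sum.inr i)))) := by
        refine Finset.sum_congr rfl fun y _ => ?_
        rw [inner y,
          Real.mul_rpow (mul_nonneg (pow_nonneg hB00 k)
            (Finset.prod_nonneg fun j _ => hg0 _)) (Finset.prod_nonneg fun i _ =>
            Real.rpow_nonneg (hPY0 _) s),
          Real.mul_rpow (pow_nonneg hB00 k) (Finset.prod_nonneg fun j _ => hg0 _),
          ← Real.finset_prod_rpow _ _ (fun j _ => hg0 _),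
          ← Real.finset_prod_rpow _ _ (fun i _ => Real.rpow_nonneg (hPY0 _) s)]
        have : ∀ i : Fin k, (PY (y (ey (Sum.inr i))) ^ s) ^ (1 + ρ)
            = PY (y (ey (Sum.inr i))) := fun i => by
          rw [← Real.rpow_mul (hPY0 _), hst, Real.rpow_one]
        rw [Finset.prod_congr rfl fun i _ => this i]
        ring
    _ = ((∑ a, PX a ^ s) ^ k) ^ (1 + ρ) *
      (∑ b, g b ^ (1 + ρ)) ^ m * (∑ p, PXY p) ^ k := by
        rw [← Finset.mul_sum,
          sum_split ey (fun j b => g b ^ (1 + ρ)) (fun i b => PY b)]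
        have : ∑ b, PY b = ∑ p, PXY p := (Fintype.sum_prod_type_right _).symm
        simp [Finset.prod_const, this, mul_assoc, hB0]

/-- The Gallager function of the delayed product distribution factorizes:
`E_n^{(1)}(ρ, P_{X^n Y^n_{(d)}}) = E^{(1)}(ρ, P_{XY}) + (|d|/n)(E^{(3)}(ρ, P_X) − E^{(1)}(ρ, P_{XY}))`. -/
theorem gallager_delayed_factorization {𝒳 𝒴 : Type*} [Fintype 𝒳] [Fintype 𝒴]
    [Nonempty 𝒳] [Nonempty 𝒴] (PXY : 𝒳 × 𝒴 → ℝ)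
    (hP0 : ∀ p, 0 ≤ PXY p) (hP1 : ∑ p, PXY p = 1)
    (n : ℕ) (hn : 0 < n) (d : ℤ) (hd : d.natAbs ≤ n)
    (ρ : ℝ) (hρ0 : 0 ≤ ρ) (hρ1 : ρ ≤ 1) :
    (1 / n : ℝ) * Real.log (∑ y : Fin n → 𝒴, (∑ x : Fin n → 𝒳,
        delayedDist PXY n d hd (x, y) ^ (1 / (1 + ρ))) ^ (1 + ρ)) =
      Real.log (∑ y, (∑ x, PXY (x, y) ^ (1 / (1 + ρ))) ^ (1 + ρ)) +
        ((d.natAbs : ℝ) / n) *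
          (Real.log ((∑ x, (∑ y, PXY (x, y)) ^ (1 / (1 + ρ))) ^ (1 + ρ)) -
            Real.log (∑ y, (∑ x, PXY (x, y) ^ (1 / (1 + ρ))) ^ (1 + ρ))) := by
  have ht : (0:ℝ) < 1 + ρ := by linarith
  have hS : ∑ y : Fin n → 𝒴, (∑ x : Fin n → 𝒳,
      delayedDist PXY n d hd (x, y) ^ (1 / (1 + ρ))) ^ (1 + ρ)
      = ((∑ a, (∑ b, PXY (a, b)) ^ (1 / (1 + ρ))) ^ d.natAbs) ^ (1 + ρ) *
        (∑ b, (∑ a, PXY (a, b) ^ (1 / (1 + ρ))) ^ (1 + ρ)) ^ (n - d.natAbs) := by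
    rcases le_or_gt 0 d with hd0 | hd0
    · have h1 : ∀ i : Fin d.natAbs, Fin.castLE hd i =
          (finSumFinEquiv.trans (finCongr (Nat.add_sub_cancel' hd))) (Sum.inl i) :=
        fun i => by simp [Fin.ext_iff]
      have h2 : ∀ j : Fin (n - d.natAbs),
          Fin.cast (Nat.add_sub_cancel' hd) (Fin.natAdd d.natAbs j) =
          (finSumFinEquiv.trans (finCongr (Nat.add_sub_cancel' hd))) (Sum.inr j) :=
        fun j => by simp [Fin.ext_iff]
      have h3 : ∀ j : Fin (n - d.natAbs), Fin.castLE (Nat.sub_le n d.natAbs) j =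
          (finSumFinEquiv.trans (finCongr (Nat.sub_add_cancel hd))) (Sum.inl j) :=
        fun j => by simp [Fin.ext_iff]
      have h4 : ∀ i : Fin d.natAbs,
          Fin.cast (Nat.sub_add_cancel hd) (Fin.natAdd (n - d.natAbs) i) =
          (finSumFinEquiv.trans (finCongr (Nat.sub_add_cancel hd))) (Sum.inr i) :=
        fun i => by simp [Fin.ext_iff]
      have hk := key_factor PXY hP0 (finSumFinEquiv.trans (finCongr (Nat.add_sub_cancel' hd)))
        (finSumFinEquiv.trans (finCongr (Nat.sub_add_cancel hd))) ρ hρ0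
      rw [hP1, one_pow, mul_one] at hk
      rw [← hk]
      refine Finset.sum_congr rfl fun y _ => ?_
      congr 1
      refine Finset.sum_congr rfl fun x _ => ?_
      congr 1
      simp only [delayedDist, if_pos hd0]
      simp only [h1, h2, h3, h4]
    · have hd0' : ¬ (0 ≤ d) := not_le.mpr hd0
      have h1 : ∀ i : Fin d.natAbs,
          Fin.cast (Nat.sub_add_cancel hd) (Fin.natAdd (n - d.natAbs) i) =
          ((Equiv.sumComm _ _).trans (finSumFinEquiv.trans
            (finCongr (Nat.sub_add_cancel hd)))) (Sum.inl i) :=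
        fun i => by simp [Fin.ext_iff]
      have h2 : ∀ j : Fin (n - d.natAbs), Fin.castLE (Nat.sub_le n d.natAbs) j =
          ((Equiv.sumComm _ _).trans (finSumFinEquiv.trans
            (finCongr (Nat.sub_add_cancel hd)))) (Sum.inr j) :=
        fun j => by simp [Fin.ext_iff]
      have h3 : ∀ j : Fin (n - d.natAbs),
          Fin.cast (Nat.add_sub_cancel' hd) (Fin.natAdd d.natAbs j) =
          ((Equiv.sumComm _ _).trans (finSumFinEquiv.trans
            (finCongr (Nat.add_sub_cancel' hd)))) (Sum.inl j) :=
        fun j => by simp [Fin.ext_iff]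
      have h4 : ∀ i : Fin d.natAbs, Fin.castLE hd i =
          ((Equiv.sumComm _ _).trans (finSumFinEquiv.trans
            (finCongr (Nat.add_sub_cancel' hd)))) (Sum.inr i) :=
        fun i => by simp [Fin.ext_iff]
      have hk := key_factor PXY hP0 ((Equiv.sumComm _ _).trans (finSumFinEquiv.trans
            (finCongr (Nat.sub_add_cancel hd))))
        ((Equiv.sumComm _ _).trans (finSumFinEquiv.trans
            (finCongr (Nat.add_sub_cancel' hd)))) ρ hρ0
      rw [hP1, one_pow, mul_one] at hk
      rw [← hk]
      refine Finset.sum_congr rfl fun y _ => ?_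
      congr 1
      refine Finset.sum_congr rfl fun x _ => ?_
      congr 1
      simp only [delayedDist, if_neg hd0']
      simp only [h1, h2, h3, h4]
  -- positivity
  obtain ⟨p₀, hp₀⟩ : ∃ p, 0 < PXY p := by
    by_contra h
    push_neg at h
    have : ∀ p, PXY p = 0 := fun p => le_antisymm (h p) (hP0 p)
    simp [this] at hP1
  have hB0pos : (0:ℝ) < ∑ a, (∑ b, PXY (a, b)) ^ (1 / (1 + ρ)) := by
    refine Finset.sum_pos' (fun a _ => Real.rpow_nonneg
      (Finset.sum_nonneg fun b _ => hP0 _) _) ⟨p₀.1, Finset.mem_univ _, ?_⟩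
    refine Real.rpow_pos_of_pos ?_ _
    have hp₀' : 0 < PXY (p₀.1, p₀.2) := by simpa using hp₀
    refine lt_of_lt_of_le hp₀' ?_
    exact Finset.single_le_sum (f := fun b => PXY (p₀.1, b))
      (fun b _ => hP0 _) (Finset.mem_univ p₀.2)
  have hApos : (0:ℝ) < ∑ b, (∑ a, PXY (a, b) ^ (1 / (1 + ρ))) ^ (1 + ρ) := by
    refine Finset.sum_pos' (fun b _ => Real.rpow_nonneg
      (Finset.sum_nonneg fun a _ => Real.rpow_nonneg (hP0 _) _) _)
      ⟨p₀.2, Finset.mem_univ _, ?_⟩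
    refine Real.rpow_pos_of_pos ?_ _
    have hp₀' : 0 < PXY (p₀.1, p₀.2) := by simpa using hp₀
    refine lt_of_lt_of_le (Real.rpow_pos_of_pos hp₀' (1/(1+ρ))) ?_
    exact Finset.single_le_sum (f := fun a => PXY (a, p₀.2) ^ (1/(1+ρ)))
      (fun a _ => Real.rpow_nonneg (hP0 _) _) (Finset.mem_univ p₀.1)
  have hmcast : ((n - d.natAbs : ℕ) : ℝ) = (n : ℝ) - (d.natAbs : ℝ) :=
    Nat.cast_sub hd
  have hn0 : (n:ℝ) ≠ 0 := Nat.cast_ne_zero.mpr hn.ne'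
  rw [hS, Real.log_mul (ne_of_gt (Real.rpow_pos_of_pos (pow_pos hB0pos _) _))
      (ne_of_gt (pow_pos hApos _)),
    Real.log_rpow (pow_pos hB0pos _), Real.log_pow, Real.log_pow,
    Real.log_rpow hB0pos, hmcast]
  field_simp
  ring
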